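/- Assume S1: for every infinite cardinal κ, 2^λ = 2^κ whenever κ ≤ λ < 2^κ. Then for every infinite cardinal ν there is a unique cardinal μ with μ ≤ ν < 2^μ such that either μ = 2^θ for some θ, or μ is a strong limit cardinal; moreover 2^μ = 2^ν. -/

import Mathlib

open Cardinal

universe u

lemma aux_not_lt
    (S1 : ∀ κ : Cardinal.{u}, ℵ₀ ≤ κ →
      ∀ l : Cardinal.{u}, κ ≤ l → l < (2 : Cardinal.{u}) ^ κ → (2 : Cardinal.{u}) ^ l = (2 : Cardinal.{u}) ^ κ)
    {ν μ μ' : Cardinal.{u}}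
    (h : ℵ₀ ≤ μ ∧ μ ≤ ν ∧ ν < (2 : Cardinal.{u}) ^ μ ∧
        ((∃ θ : Cardinal.{u}, (2 : Cardinal.{u}) ^ θ = μ) ∨ μ.IsStrongLimit))
    (h' : ℵ₀ ≤ μ' ∧ μ' ≤ ν ∧ ν < (2 : Cardinal.{u}) ^ μ' ∧
        ((∃ θ : Cardinal.{u}, (2 : Cardinal.{u}) ^ θ = μ') ∨ μ'.IsStrongLimit))
    (hlt : μ' < μ) : False := by
  obtain ⟨hμ, hμν, hν2, hcase⟩ := h
  obtain ⟨hμ', hμ'ν, hν2', -⟩ := h'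
  rcases hcase with ⟨θ, hθ⟩ | hsl
  · have hθinf : ℵ₀ ≤ θ := by
      by_contra hfin
      push_neg at hfin
      have : (2 : Cardinal.{u}) ^ θ < ℵ₀ :=
        power_lt_aleph0 (nat_lt_aleph0 2) hfin
      rw [hθ] at this
      exact absurd hμ (not_le.2 this)
    rcases le_total θ μ' with hle | hle
    · have : (2 : Cardinal.{u}) ^ μ' = (2 : Cardinal.{u}) ^ θ :=
        S1 θ hθinf μ' hle (by rw [hθ]; exact hlt)
      rw [hθ] at this
      exact absurd hν2' (not_lt.2 (this ▸ hμν))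
    · have hθlt : θ < (2 : Cardinal.{u}) ^ μ' := by
        calc θ < 2 ^ θ := cantor θ
        _ = μ := hθ
        _ ≤ ν := hμν
        _ < 2 ^ μ' := hν2'
      have : (2 : Cardinal.{u}) ^ θ = (2 : Cardinal.{u}) ^ μ' :=
        S1 μ' hμ' θ hle hθlt
      rw [hθ] at this
      -- μ = 2 ^ μ' > ν ≥ μ : contradiction
      exact absurd (this ▸ hν2') (not_lt.2 hμν)
  · have : (2 : Cardinal.{u}) ^ μ' < μ := hsl.two_power_lt hlt
    exact absurd hν2' (not_lt.2 (this.le.trans hμν))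

/-- Under S1, every infinite cardinal `ν` admits a unique `μ` with `μ ≤ ν < 2^μ`
such that `μ` is a power `2^θ` or a strong limit; moreover `2^μ = 2^ν`. -/
theorem stmt_10
    (S1 : ∀ κ : Cardinal.{u}, ℵ₀ ≤ κ →
      ∀ l : Cardinal.{u}, κ ≤ l → l < (2 : Cardinal.{u}) ^ κ → (2 : Cardinal.{u}) ^ l = (2 : Cardinal.{u}) ^ κ)
    (ν : Cardinal.{u}) (hν : ℵ₀ ≤ ν) :
    ∃ μ : Cardinal.{u},
      (ℵ₀ ≤ μ ∧ μ ≤ ν ∧ ν < (2 : Cardinal.{u}) ^ μ ∧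
        ((∃ θ : Cardinal.{u}, (2 : Cardinal.{u}) ^ θ = μ) ∨ μ.IsStrongLimit)) ∧
      (2 : Cardinal.{u}) ^ μ = (2 : Cardinal.{u}) ^ ν ∧
      ∀ μ' : Cardinal.{u},
        (ℵ₀ ≤ μ' ∧ μ' ≤ ν ∧ ν < (2 : Cardinal.{u}) ^ μ' ∧
          ((∃ θ : Cardinal.{u}, (2 : Cardinal.{u}) ^ θ = μ') ∨ μ'.IsStrongLimit)) → μ' = μ := by
  -- first find a good μ
  set S : Set Cardinal.{u} := {c | ℵ₀ ≤ c ∧ ν < (2 : Cardinal.{u}) ^ c} with hS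
  have hνS : ν ∈ S := ⟨hν, cantor ν⟩
  have hne : S.Nonempty := ⟨ν, hνS⟩
  obtain ⟨hμ₀inf, hμ₀pow⟩ : sInf S ∈ S := csInf_mem hne
  set μ₀ := sInf S with hμ₀
  have hmin : ∀ c ∈ S, μ₀ ≤ c := fun c hc => csInf_le (OrderBot.bddBelow S) hc
  have hμ₀ν : μ₀ ≤ ν := hmin ν hνS
  have hgood : ∃ μ : Cardinal.{u}, ℵ₀ ≤ μ ∧ μ ≤ ν ∧ ν < (2 : Cardinal.{u}) ^ μ ∧
      ((∃ θ : Cardinal.{u}, (2 : Cardinal.{u}) ^ θ = μ) ∨ μ.IsStrongLimit) := by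
    by_cases hsl : μ₀.IsStrongLimit
    · exact ⟨μ₀, hμ₀inf, hμ₀ν, hμ₀pow, Or.inr hsl⟩
    · rw [Cardinal.isStrongLimit_iff, Cardinal.IsStrongPrelimit] at hsl
      push_neg at hsl
      have hne0 : μ₀ ≠ 0 := (aleph0_pos.trans_le hμ₀inf).ne'
      obtain ⟨lam, hlam, hlam2⟩ := hsl hne0
      have hlaminf : ℵ₀ ≤ lam := by
        by_contra hfin
        push_neg at hfin
        have : (2 : Cardinal.{u}) ^ lam < ℵ₀ := power_lt_aleph0 (nat_lt_aleph0 2) hfin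
        exact absurd (hμ₀inf.trans hlam2) (not_le.2 this)
      have hlamν : (2 : Cardinal.{u}) ^ lam ≤ ν := by
        by_contra hlt
        push_neg at hlt
        exact absurd (hmin lam ⟨hlaminf, hlt⟩) (not_le.2 hlam)
      refine ⟨(2 : Cardinal.{u}) ^ lam, hμ₀inf.trans hlam2, hlamν, ?_, Or.inl ⟨lam, rfl⟩⟩
      calc ν < 2 ^ μ₀ := hμ₀pow
      _ ≤ 2 ^ (2 ^ lam) := power_le_power_left two_ne_zero hlam2
  obtain ⟨μ, hμinf, hμν, hν2, hcase⟩ := hgood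
  refine ⟨μ, ⟨hμinf, hμν, hν2, hcase⟩, (S1 μ hμinf ν hμν hν2).symm, ?_⟩
  intro μ' h'
  rcases lt_trichotomy μ' μ with hlt | heq | hgt
  · exact absurd (aux_not_lt S1 ⟨hμinf, hμν, hν2, hcase⟩ h' hlt) id
  · exact heq
  · exact absurd (aux_not_lt S1 h' ⟨hμinf, hμν, hν2, hcase⟩ hgt) id
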